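/- (a) Let f : ℝ → [0,∞] be lower semicontinuous and convex with f(0) = 1 and D_f ≠ {0}; for each k ≥ 1 and each ε admissible at level k defining A_k(f), the limit lim_{n→∞} (1/n) log ℙ(M_n ∈ A_k(f)) exists in [−∞,0] and equals sup_n (1/n) log ℙ(M_n ∈ A_k(f)); in particular limsup_{n} (1/n) log ℙ(M_n ∈ A_k(f)) = liminf_{n} (1/n) log ℙ(M_n ∈ A_k(f)). (b) If f(0) = 1 and f(θ) = ∞ for all θ ≠ 0, then for each k ≥ 1 the limit lim_{n→∞} (1/n) log ℙ(M_n ∈ V_k(f)) exists in [−∞,0] and equals sup_n (1/n) log ℙ(M_n ∈ V_k(f)). -/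

import Mathlib

open MeasureTheory Filter Metric Set
open scoped ENNReal Classical

noncomputable section

/-- Epigraph of an extended-real-valued function on `ℝ`, as a subset of `ℝ²`
(which carries the box metric `dist p q = max |p₁-q₁| |p₂-q₂|`). -/
def epiE (f : ℝ → EReal) : Set (ℝ × ℝ) := {p | f p.1 ≤ (p.2 : EReal)}

/-- `awGap A B r` is `sup_{x ∈ B̄_r} |dist(x,A) - dist(x,B)|`. -/
def awGap (A B : Set (ℝ × ℝ)) (r : ℝ) : ℝ :=
  sSup ((fun x => |infDist x A - infDist x B|) '' closedBall (0 : ℝ × ℝ) r)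

/-- Attouch–Wets convergence of a sequence of functions, via epigraphs. -/
def AWTendsto (F : ℕ → ℝ → EReal) (f : ℝ → EReal) : Prop :=
  ∀ r : ℝ, 0 < r → Tendsto (fun n => awGap (epiE (F n)) (epiE f) r) atTop (nhds 0)

/-- The basic Attouch–Wets neighbourhood `V_k(f)`. -/
def Vk (k : ℕ) (f : ℝ → EReal) : Set (ℝ → EReal) :=
  {g | awGap (epiE g) (epiE f) (k : ℝ) < 1 / (k : ℝ)}

/-- Convexity for extended-real-valued functions on `ℝ`. -/
def ERConvex (f : ℝ → EReal) : Prop :=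
  ∀ x y a b : ℝ, 0 ≤ a → 0 ≤ b → a + b = 1 →
    f (a * x + b * y) ≤ (a : EReal) * f x + (b : EReal) * f y

/-- Effective domain of an extended-real-valued function. -/
def effDom (f : ℝ → EReal) : Set ℝ := {θ | f θ < ⊤}

/-- The moment generating function of a measure on `ℝ`, with values in `(0,∞]`. -/
def mgfE (ν : Measure ℝ) : ℝ → EReal :=
  fun θ => ((∫⁻ x, ENNReal.ofReal (Real.exp (θ * x)) ∂ν : ℝ≥0∞) : EReal)

/-- `log` of a probability, with the convention `log 0 = -∞`. -/
def elog (p : ℝ≥0∞) : EReal := if p = 0 then ⊥ else ((Real.log p.toReal : ℝ) : EReal)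

/-- The empirical moment generating function estimator
`M_n(θ) = (1/n) ∑_{i<n} exp (θ X_i)`. -/
def Mn {Ω : Type*} (X : ℕ → Ω → ℝ) (n : ℕ) (ω : Ω) : ℝ → EReal :=
  fun θ => (((n : ℝ)⁻¹ * ∑ i ∈ Finset.range n, Real.exp (θ * X i ω) : ℝ) : EReal)

/-- The rate value `I_M(f) = -inf_{k ≥ 1} limsup_n (1/n) log ℙ(M_n ∈ V_k(f))`. -/
def IM {Ω : Type*} [MeasurableSpace Ω] (P : Measure Ω) (X : ℕ → Ω → ℝ)
    (f : ℝ → EReal) : EReal :=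
  - ⨅ k ∈ Set.Ici 1, limsup
      (fun n : ℕ => (((n : ℝ)⁻¹ : ℝ) : EReal) * elog (P {ω | Mn X n ω ∈ Vk k f})) atTop

/-- `f` is lower semicontinuous, convex and `[0,∞]`-valued. -/
def IsAdm0 (f : ℝ → EReal) : Prop :=
  LowerSemicontinuous f ∧ ERConvex f ∧ ∀ θ, 0 ≤ f θ

def etaSet (f : ℝ → EReal) (k : ℕ) : Set ℝ :=
  {θ | |θ| < 2 * (k : ℝ) + 2 ∧ f θ < ((2 * (k : ℝ) + 2 : ℝ) : EReal)}

def etaL (f : ℝ → EReal) (k : ℕ) : ℝ := sInf (etaSet f k)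

def etaR (f : ℝ → EReal) (k : ℕ) : ℝ := sSup (etaSet f k)

/-- `d((a, f a), (b, f b)) < δ` in the box metric on `ℝ × (−∞,∞]`, where a point
with infinite second coordinate is at infinite distance from every point. -/
def closePts (f : ℝ → EReal) (a b δ : ℝ) : Prop :=
  |a - b| < δ ∧ f a < f b + (δ : EReal) ∧ f b < f a + (δ : EReal)

/-- `ε` is admissible for `f` at level `k`. -/
def Adm (f : ℝ → EReal) (k : ℕ) (ε : ℝ) : Prop :=
  0 < ε ∧ ε < (etaR f k - etaL f k) / 2 ∧
  (∀ a ∈ Set.Icc (etaL f k) (etaL f k + ε), ∀ b ∈ Set.Icc (etaL f k) (etaL f k + ε),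
    closePts f a b (1 / (2 * (k : ℝ)))) ∧
  (∀ a ∈ Set.Icc (etaR f k - ε) (etaR f k), ∀ b ∈ Set.Icc (etaR f k - ε) (etaR f k),
    closePts f a b (1 / (2 * (k : ℝ))))

/-- The shifted and curtailed function `f♯_k` (built using a given `ε`). -/
def fsharp (f : ℝ → EReal) (k : ℕ) (ε : ℝ) : ℝ → EReal :=
  fun θ => if θ ∈ Set.Icc (etaL f k + ε) (etaR f k - ε)
    then f θ + ((1 / (2 * (k : ℝ)) : ℝ) : EReal) else ⊤

def eInfD (f : ℝ → EReal) : EReal := sInf ((fun θ : ℝ => (θ : EReal)) '' effDom f)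

def eSupD (f : ℝ → EReal) : EReal := sSup ((fun θ : ℝ => (θ : EReal)) '' effDom f)

/-- `g ⋘ h` : `inf D_g < inf D_h`, `sup D_h < sup D_g` and `g < h` on
`[inf D_h, sup D_h]`. -/
def lll (g h : ℝ → EReal) : Prop :=
  eInfD g < eInfD h ∧ eSupD h < eSupD g ∧
    ∀ θ : ℝ, eInfD h ≤ (θ : EReal) → (θ : EReal) ≤ eSupD h → g θ < h θ

/-- The local convex base element `A_k(f) = V_k(f♯_k) ∩ {g : g ⋘ f♯_k}`, inside
the class of lower semicontinuous convex `[0,∞]`-valued functions. -/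
def Ak (f : ℝ → EReal) (k : ℕ) (ε : ℝ) : Set (ℝ → EReal) :=
  {g | IsAdm0 g ∧ g ∈ Vk k (fsharp f k ε) ∧ lll g (fsharp f k ε)}

/-! ### awGap toolkit -/

lemma gapFun_bound (A B : Set (ℝ × ℝ)) (x : ℝ × ℝ) :
    |infDist x A - infDist x B| ≤ |infDist 0 A - infDist 0 B| + 2 * dist x 0 := by
  have h1 : infDist x A ≤ infDist 0 A + dist x 0 := infDist_le_infDist_add_dist
  have h2 : infDist x B ≤ infDist 0 B + dist x 0 := infDist_le_infDist_add_dist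
  have h3 : infDist 0 A ≤ infDist x A + dist 0 x := infDist_le_infDist_add_dist
  have h4 : infDist 0 B ≤ infDist x B + dist 0 x := infDist_le_infDist_add_dist
  rw [dist_comm 0 x] at h3 h4
  have habs := le_abs_self (infDist 0 A - infDist 0 B)
  have habs' := neg_abs_le (infDist 0 A - infDist 0 B)
  rw [abs_le]
  constructor <;> linarith

lemma gap_bddAbove (A B : Set (ℝ × ℝ)) (r : ℝ) :
    BddAbove ((fun x => |infDist x A - infDist x B|) '' closedBall (0 : ℝ × ℝ) r) := by
  refine ⟨|infDist 0 A - infDist 0 B| + 2 * r, ?_⟩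
  rintro y ⟨x, hx, rfl⟩
  have := gapFun_bound A B x
  have hxr : dist x 0 ≤ r := mem_closedBall.1 hx
  nlinarith

lemma le_awGap {A B : Set (ℝ × ℝ)} {r : ℝ} {x : ℝ × ℝ} (hx : x ∈ closedBall (0 : ℝ × ℝ) r) :
    |infDist x A - infDist x B| ≤ awGap A B r :=
  le_csSup (gap_bddAbove A B r) (mem_image_of_mem _ hx)

lemma awGap_nonneg {A B : Set (ℝ × ℝ)} {r : ℝ} (hr : 0 ≤ r) : 0 ≤ awGap A B r :=
  le_trans (abs_nonneg _) (le_awGap (mem_closedBall_self hr))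

lemma awGap_le {A B : Set (ℝ × ℝ)} {r C : ℝ} (hC : 0 ≤ C)
    (h : ∀ x ∈ closedBall (0 : ℝ × ℝ) r, |infDist x A - infDist x B| ≤ C) :
    awGap A B r ≤ C := by
  refine Real.sSup_le ?_ hC
  rintro y ⟨x, hx, rfl⟩
  exact h x hx

/-! ### Nice real functions -/

def ecoe (p : ℝ → ℝ) : ℝ → EReal := fun θ => ((p θ : ℝ) : EReal)

def Nice (p : ℝ → ℝ) : Prop :=
  Continuous p ∧ ConvexOn ℝ Set.univ p ∧ (∀ θ, 0 ≤ p θ) ∧ p 0 = 1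

lemma mem_epiE_ecoe {p : ℝ → ℝ} {x : ℝ × ℝ} : x ∈ epiE (ecoe p) ↔ p x.1 ≤ x.2 := by
  simp [epiE, ecoe, EReal.coe_le_coe_iff]

lemma epiE_ecoe_nonempty (p : ℝ → ℝ) : (epiE (ecoe p)).Nonempty :=
  ⟨(0, p 0), mem_epiE_ecoe.2 le_rfl⟩

/-! ### Perturbation lemma for awGap -/

lemma infDist_epiE_le {p : ℝ → ℝ} (hp0 : p 0 = 1) {k : ℝ} (hk : 1 ≤ k) {x : ℝ × ℝ}
    (hx : x ∈ closedBall (0 : ℝ × ℝ) k) : infDist x (epiE (ecoe p)) ≤ k + 1 := by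
  have hx1 : |x.1| ≤ k := by
    have := mem_closedBall.1 hx
    rw [Prod.dist_eq] at this
    have := le_trans (le_max_left _ _) this
    simpa [Real.dist_eq] using this
  have hx2 : |x.2| ≤ k := by
    have := mem_closedBall.1 hx
    rw [Prod.dist_eq] at this
    have := le_trans (le_max_right _ _) this
    simpa [Real.dist_eq] using this
  have hmem : ((0 : ℝ), max x.2 1) ∈ epiE (ecoe p) := mem_epiE_ecoe.2 (by simp [hp0])
  refine le_trans (infDist_le_dist_of_mem hmem) ?_
  rw [Prod.dist_eq, Real.dist_eq, Real.dist_eq]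
  have h1 : |x.1 - 0| ≤ k := by simpa using hx1
  have h2 : |x.2 - max x.2 1| ≤ k + 1 := by
    rcases le_total x.2 1 with h | h
    · rw [max_eq_right h, abs_sub_comm, abs_of_nonneg (by linarith)]
      have : -k ≤ x.2 := by have := abs_le.1 hx2; linarith [this.1]
      linarith
    · rw [max_eq_left h]; simp; linarith
  exact max_le (by linarith) h2

lemma infDist_epiE_perturb {p q : ℝ → ℝ} (hp0 : p 0 = 1) (hq0 : q 0 = 1) {k δ : ℝ}
    (hk : 1 ≤ k) (hδ : 0 ≤ δ)
    (hpq : ∀ θ ∈ Icc (-(2*k+2)) (2*k+2), |p θ - q θ| ≤ δ) {x : ℝ × ℝ}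
    (hx : x ∈ closedBall (0 : ℝ × ℝ) k) :
    infDist x (epiE (ecoe p)) ≤ infDist x (epiE (ecoe q)) + δ := by
  have hne : (epiE (ecoe q)).Nonempty := epiE_ecoe_nonempty q
  have hqle : infDist x (epiE (ecoe q)) ≤ k + 1 := infDist_epiE_le hq0 hk hx
  -- it suffices to show ≤ infDist + δ + ε for all ε > 0
  refine le_of_forall_pos_le_add ?_
  intro ε hε
  set ε' := min ε 1 with hε'def
  have hε' : 0 < ε' := lt_min hε one_pos
  have h1 : infDist x (epiE (ecoe q)) < infDist x (epiE (ecoe q)) + ε' := by linarith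
  obtain ⟨y, hy, hdy⟩ := (infDist_lt_iff hne).1 h1
  have hy1 : |y.1| ≤ 2*k+2 := by
    have hxy1 : |x.1 - y.1| ≤ dist x y := by
      rw [Prod.dist_eq, Real.dist_eq]; exact le_max_left _ _
    have hx1 : |x.1| ≤ k := by
      have := mem_closedBall.1 hx
      rw [Prod.dist_eq] at this
      have := le_trans (le_max_left _ _) this
      simpa [Real.dist_eq] using this
    have hdyk : dist x y ≤ k + 2 := by
      have : ε' ≤ 1 := min_le_right _ _
      linarith [hdy.le]
    calc |y.1| ≤ |x.1| + |x.1 - y.1| := by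
          have := abs_sub_abs_le_abs_sub y.1 x.1
          rw [abs_sub_comm y.1 x.1] at this
          linarith [abs_sub_comm x.1 y.1 ▸ this]
      _ ≤ 2*k+2 := by linarith
  have hqy : q y.1 ≤ y.2 := mem_epiE_ecoe.1 hy
  have hclose : |p y.1 - q y.1| ≤ δ := hpq y.1 ⟨neg_le_of_abs_le hy1, le_of_abs_le hy1⟩
  have hmem : (y.1, max y.2 (p y.1)) ∈ epiE (ecoe p) := mem_epiE_ecoe.2 (le_max_right _ _)
  have hdist : dist y (y.1, max y.2 (p y.1)) ≤ δ := by
    rw [Prod.dist_eq, Real.dist_eq, Real.dist_eq]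
    simp only [sub_self, abs_zero]
    refine max_le hδ ?_
    rcases le_total (p y.1) y.2 with h | h
    · rw [max_eq_left h]; simpa using hδ
    · rw [max_eq_right h, abs_sub_comm, abs_of_nonneg (by linarith)]
      have := abs_le.1 hclose
      linarith [this.1]
  calc infDist x (epiE (ecoe p)) ≤ dist x (y.1, max y.2 (p y.1)) := infDist_le_dist_of_mem hmem
    _ ≤ dist x y + dist y (y.1, max y.2 (p y.1)) := dist_triangle _ _ _
    _ ≤ (infDist x (epiE (ecoe q)) + ε') + δ := by linarith [hdy.le]
    _ ≤ infDist x (epiE (ecoe q)) + δ + ε := by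
        have : ε' ≤ ε := min_le_left _ _
        linarith

lemma awGap_perturb {p q : ℝ → ℝ} (hp0 : p 0 = 1) (hq0 : q 0 = 1) {k δ : ℝ}
    (hk : 1 ≤ k) (hδ : 0 ≤ δ)
    (hpq : ∀ θ ∈ Icc (-(2*k+2)) (2*k+2), |p θ - q θ| ≤ δ) (B : Set (ℝ × ℝ)) :
    awGap (epiE (ecoe p)) B k ≤ awGap (epiE (ecoe q)) B k + δ := by
  have hk0 : (0:ℝ) ≤ k := by linarith
  refine awGap_le (by linarith [awGap_nonneg (A := epiE (ecoe q)) (B := B) hk0]) ?_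
  intro x hx
  have h1 := infDist_epiE_perturb hp0 hq0 hk hδ hpq hx
  have h2 := infDist_epiE_perturb hq0 hp0 hk hδ
    (fun θ hθ => by rw [abs_sub_comm]; exact hpq θ hθ) hx
  have h3 := le_awGap (A := epiE (ecoe q)) (B := B) hx
  rw [abs_le] at *
  constructor <;> [linarith [h3.1]; linarith [h3.2]]

/-! ### Convex combination lemma for awGap -/

lemma awGap_combo {g1 g2 : ℝ → ℝ} {a b : ℝ} (ha : 0 ≤ a) (hb : 0 ≤ b) (hab : a + b = 1)
    {B : Set (ℝ × ℝ)} (hBne : B.Nonempty)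
    (hB1 : B ⊆ epiE (ecoe g1)) (hB2 : B ⊆ epiE (ecoe g2)) {k : ℝ} (hk : 0 ≤ k) :
    awGap (epiE (ecoe (fun θ => a * g1 θ + b * g2 θ))) B k ≤
      max (awGap (epiE (ecoe g1)) B k) (awGap (epiE (ecoe g2)) B k) := by
  set g : ℝ → ℝ := fun θ => a * g1 θ + b * g2 θ with hg
  have hBsub : B ⊆ epiE (ecoe g) := by
    intro x hx
    have h1 := mem_epiE_ecoe.1 (hB1 hx)
    have h2 := mem_epiE_ecoe.1 (hB2 hx)
    refine mem_epiE_ecoe.2 ?_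
    calc a * g1 x.1 + b * g2 x.1 ≤ a * x.2 + b * x.2 := by
          gcongr
      _ = x.2 := by rw [← add_mul, hab, one_mul]
  have hsub : epiE (ecoe g) ⊆ epiE (ecoe g1) ∪ epiE (ecoe g2) := by
    intro x hx
    have hgx := mem_epiE_ecoe.1 hx
    by_contra hcon
    simp only [Set.mem_union, not_or] at hcon
    have h1 : x.2 < g1 x.1 := by
      by_contra h; exact hcon.1 (mem_epiE_ecoe.2 (not_lt.1 h))
    have h2 : x.2 < g2 x.1 := by
      by_contra h; exact hcon.2 (mem_epiE_ecoe.2 (not_lt.1 h))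
    have : x.2 < a * g1 x.1 + b * g2 x.1 := by
      rcases ha.lt_or_eq with ha' | ha'
      · have t1 := mul_lt_mul_of_pos_left h1 ha'
        have t2 := mul_le_mul_of_nonneg_left h2.le hb
        have t3 : a * x.2 + b * x.2 = x.2 := by rw [← add_mul, hab, one_mul]
        linarith
      · have hb1 : b = 1 := by linarith
        rw [← ha', hb1]; simpa using h2
    simp only [g] at hgx
    linarith
  refine awGap_le (le_max_iff.2 (Or.inl (awGap_nonneg hk))) ?_
  intro x hx
  -- since B ⊆ epi g, infDist x (epi g) ≤ infDist x B
  have hle : infDist x (epiE (ecoe g)) ≤ infDist x B :=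
    infDist_le_infDist_of_subset hBsub hBne
  have hle1 : infDist x (epiE (ecoe g1)) ≤ infDist x B :=
    infDist_le_infDist_of_subset hB1 hBne
  have hle2 : infDist x (epiE (ecoe g2)) ≤ infDist x B :=
    infDist_le_infDist_of_subset hB2 hBne
  rw [abs_of_nonpos (by linarith), neg_sub]
  -- infDist x (epi g) ≥ min of the two infDists
  have hmin : min (infDist x (epiE (ecoe g1))) (infDist x (epiE (ecoe g2))) ≤
      infDist x (epiE (ecoe g)) := by
    by_contra hcon
    push_neg at hcon
    obtain ⟨y, hy, hdy⟩ := (infDist_lt_iff ⟨_, hBsub hBne.choose_spec⟩).1 hcon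
    rcases hsub hy with h | h
    · have := infDist_le_dist_of_mem h (x := x)
      have hm := min_le_left (infDist x (epiE (ecoe g1))) (infDist x (epiE (ecoe g2)))
      linarith
    · have := infDist_le_dist_of_mem h (x := x)
      have hm := min_le_right (infDist x (epiE (ecoe g1))) (infDist x (epiE (ecoe g2)))
      linarith
  rcases le_total (infDist x (epiE (ecoe g1))) (infDist x (epiE (ecoe g2))) with h | h
  · rw [min_eq_left h] at hmin
    have h1 := le_awGap (A := epiE (ecoe g1)) (B := B) hx
    rw [abs_of_nonpos (by linarith), neg_sub] at h1
    exact le_trans (by linarith) (le_max_iff.2 (Or.inl h1))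
  · rw [min_eq_right h] at hmin
    have h2 := le_awGap (A := epiE (ecoe g2)) (B := B) hx
    rw [abs_of_nonpos (by linarith), neg_sub] at h2
    exact le_trans (by linarith) (le_max_iff.2 (Or.inr h2))

/-! ### Nice functions are admissible -/

lemma nice_isAdm0 {p : ℝ → ℝ} (hp : Nice p) : IsAdm0 (ecoe p) := by
  obtain ⟨hc, hconv, hpos, -⟩ := hp
  refine ⟨(continuous_coe_real_ereal.comp hc).lowerSemicontinuous, ?_, fun θ => ?_⟩
  · intro x y a b ha hb hab
    show ((p (a*x+b*y) : ℝ) : EReal) ≤ (a : EReal) * ((p x : ℝ) : EReal) + (b : EReal) * ((p y : ℝ):EReal)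
    rw [← EReal.coe_mul, ← EReal.coe_mul, ← EReal.coe_add, EReal.coe_le_coe_iff]
    exact hconv.2 (mem_univ x) (mem_univ y) ha hb hab
  · exact EReal.coe_nonneg.2 (hpos θ)

lemma effDom_ecoe (p : ℝ → ℝ) : effDom (ecoe p) = univ := by
  ext θ; simp [effDom, ecoe, EReal.coe_lt_top]

lemma eInfD_ecoe (p : ℝ → ℝ) : eInfD (ecoe p) = ⊥ := by
  rw [eInfD, sInf_eq_bot]
  intro b hb
  induction b using EReal.rec with
  | bot => exact absurd hb (lt_irrefl _)
  | coe r => exact ⟨((r - 1 : ℝ) : EReal), ⟨r - 1, by simp [effDom_ecoe]⟩,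
      EReal.coe_lt_coe_iff.2 (by linarith)⟩
  | top => exact ⟨((0:ℝ) : EReal), ⟨0, by simp [effDom_ecoe]⟩, EReal.coe_lt_top 0⟩

lemma eSupD_ecoe (p : ℝ → ℝ) : eSupD (ecoe p) = ⊤ := by
  rw [eSupD, sSup_eq_top]
  intro b hb
  induction b using EReal.rec with
  | top => exact absurd hb (lt_irrefl _)
  | coe r => exact ⟨((r + 1 : ℝ) : EReal), ⟨r + 1, by simp [effDom_ecoe]⟩,
      EReal.coe_lt_coe_iff.2 (by linarith)⟩
  | bot => exact ⟨((0:ℝ) : EReal), ⟨0, by simp [effDom_ecoe]⟩, EReal.bot_lt_coe 0⟩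

/-! ### EReal helpers -/

lemma ereal_add_lt_coe {t c : ℝ} {u : EReal} (h : (t : EReal) < u) :
    ((t + c : ℝ) : EReal) < u + (c : EReal) := by
  induction u using EReal.rec with
  | bot => exact absurd h (by simp)
  | coe r =>
      rw [← EReal.coe_add, EReal.coe_lt_coe_iff]
      exact add_lt_add_left (EReal.coe_lt_coe_iff.1 h) c
  | top => rw [EReal.top_add_coe]; exact EReal.coe_lt_top _

lemma ereal_combo_lt {a b x1 x2 : ℝ} {y : EReal} (ha : 0 ≤ a) (hb : 0 ≤ b) (hab : a + b = 1)
    (h1 : (x1 : EReal) < y) (h2 : (x2 : EReal) < y) :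
    ((a * x1 + b * x2 : ℝ) : EReal) < y := by
  induction y using EReal.rec with
  | bot => exact absurd h1 (by simp)
  | top => exact EReal.coe_lt_top _
  | coe r =>
      rw [EReal.coe_lt_coe_iff] at *
      rcases ha.lt_or_eq with ha' | ha'
      · have t1 := mul_lt_mul_of_pos_left h1 ha'
        have t2 := mul_le_mul_of_nonneg_left h2.le hb
        have t3 : a * r + b * r = r := by rw [← add_mul, hab, one_mul]
        linarith
      · have hb1 : b = 1 := by linarith
        rw [← ha', hb1]; simpa using h2

/-! ### Lower semicontinuous margin on a compact set -/

lemma lsc_margin {h : ℝ → EReal} (hh : LowerSemicontinuous h) {p : ℝ → ℝ} (hp : Continuous p)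
    {K : Set ℝ} (hK : IsCompact K) (hlt : ∀ θ ∈ K, ((p θ : ℝ) : EReal) < h θ) :
    ∃ δ : ℝ, 0 < δ ∧ ∀ θ ∈ K, ((p θ + δ : ℝ) : EReal) < h θ := by
  rcases K.eq_empty_or_nonempty with hKe | hKne
  · exact ⟨1, one_pos, by simp [hKe]⟩
  have key : ∀ θ₀ : K, ∃ c : ℝ, (p (θ₀ : ℝ) : EReal) < (c : EReal) ∧ (c : EReal) < h (θ₀ : ℝ) := by
    rintro ⟨θ₀, hθ₀⟩
    obtain ⟨w, hw1, hw2⟩ := exists_between (hlt θ₀ hθ₀)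
    induction w using EReal.rec with
    | bot => exact absurd hw1 (by simp)
    | top => exact absurd hw2 (by simp)
    | coe c => exact ⟨c, hw1, hw2⟩
  choose c hc1 hc2 using key
  set δf : K → ℝ := fun i => (c i - p (i : ℝ)) / 2 with hδf
  have hδfpos : ∀ i : K, 0 < δf i := by
    intro i
    have := EReal.coe_lt_coe_iff.1 (hc1 i)
    simp only [hδf]; linarith
  set U : K → Set ℝ := fun i => {θ | ((c i : ℝ) : EReal) < h θ} ∩ p ⁻¹' (Iio (p (i : ℝ) + δf i))
    with hU
  have hUopen : ∀ i, IsOpen (U i) := by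
    intro i
    exact (hh.isOpen_preimage _).inter (hp.isOpen_preimage _ isOpen_Iio)
  have hcover : K ⊆ ⋃ i : K, U i := by
    intro θ hθ
    refine mem_iUnion.2 ⟨⟨θ, hθ⟩, ?_, ?_⟩
    · exact hc2 _
    · simp only [mem_preimage, mem_Iio]
      exact lt_add_of_pos_right _ (hδfpos ⟨θ, hθ⟩)
  obtain ⟨t, ht⟩ := hK.elim_finite_subcover U hUopen hcover
  have htne : t.Nonempty := by
    rcases hKne with ⟨θ, hθ⟩
    rcases mem_iUnion₂.1 (ht hθ) with ⟨i, hit, -⟩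
    exact ⟨i, hit⟩
  refine ⟨t.inf' htne δf, ?_, ?_⟩
  · exact (Finset.lt_inf'_iff htne).2 fun i _ => hδfpos i
  · intro θ hθ
    rcases mem_iUnion₂.1 (ht hθ) with ⟨i, hit, hiU⟩
    obtain ⟨hi1, hi2⟩ := hiU
    simp only [mem_preimage, mem_Iio] at hi2
    have hle : t.inf' htne δf ≤ δf i := Finset.inf'_le _ hit
    have : p θ + t.inf' htne δf < c i := by
      have : p θ + δf i < p (i : ℝ) + 2 * δf i := by linarith
      have h2 : p (i : ℝ) + 2 * δf i = c i := by simp only [hδf]; ring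
      linarith
    calc ((p θ + t.inf' htne δf : ℝ) : EReal) < ((c i : ℝ) : EReal) := EReal.coe_lt_coe_iff.2 this
      _ < h θ := hi1

/-! ### fsharp facts -/

lemma fsharp_eq_top_of_not_mem {f : ℝ → EReal} {k : ℕ} {ε : ℝ} {θ : ℝ}
    (h : θ ∉ Icc (etaL f k + ε) (etaR f k - ε)) : fsharp f k ε θ = ⊤ := by
  rw [fsharp, if_neg h]

lemma effDom_fsharp_subset {f : ℝ → EReal} {k : ℕ} {ε : ℝ} :
    effDom (fsharp f k ε) ⊆ Icc (etaL f k + ε) (etaR f k - ε) := by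
  intro θ hθ
  by_contra hc
  rw [effDom, mem_setOf_eq, fsharp_eq_top_of_not_mem hc] at hθ
  exact absurd hθ (lt_irrefl _)

lemma ereal_top_or_coe {u : EReal} (h : u ≠ ⊥) : u = ⊤ ∨ ∃ r : ℝ, u = (r : EReal) := by
  induction u using EReal.rec with
  | bot => exact absurd rfl h
  | coe r => exact Or.inr ⟨r, rfl⟩
  | top => exact Or.inl rfl

lemma fsharp_lsc {f : ℝ → EReal} (hf : LowerSemicontinuous f) (hfpos : ∀ θ, 0 ≤ f θ)
    (k : ℕ) (ε : ℝ) : LowerSemicontinuous (fsharp f k ε) := by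
  intro x y hy
  have hC0 : (0:ℝ) ≤ 1/(2*(k:ℝ)) := by positivity
  by_cases hx : x ∈ Icc (etaL f k + ε) (etaR f k - ε)
  · rw [fsharp, if_pos hx] at hy
    induction y using EReal.rec with
    | top => exact absurd hy (by simp)
    | bot =>
        refine Eventually.of_forall fun z => ?_
        show (⊥ : EReal) < fsharp f k ε z
        rw [fsharp]
        split
        · have : (0 : EReal) ≤ f z + ((1/(2*(k:ℝ)) : ℝ) : EReal) :=
            add_nonneg (hfpos z) (EReal.coe_nonneg.2 hC0)
          exact lt_of_lt_of_le (by simp) this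
        · simp
    | coe s =>
        have h0 : (0 : EReal) ≤ f x := hfpos x
        have hne : f x ≠ ⊥ := fun hb => absurd h0 (by simp [hb])
        have hlt : ((s - 1/(2*(k:ℝ)) : ℝ) : EReal) < f x := by
          rcases ereal_top_or_coe hne with ht | ⟨r, hr⟩
          · rw [ht]; exact EReal.coe_lt_top _
          · rw [hr] at hy ⊢
            rw [← EReal.coe_add, gt_iff_lt, EReal.coe_lt_coe_iff] at hy
            exact EReal.coe_lt_coe_iff.2 (by linarith)
        filter_upwards [hf x _ hlt] with z hz
        rw [fsharp]
        split
        · have := ereal_add_lt_coe (c := 1/(2*(k:ℝ))) hz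
          rw [sub_add_cancel] at this
          exact this
        · exact EReal.coe_lt_top s
  · have hev : ∀ᶠ z in nhds x, z ∉ Icc (etaL f k + ε) (etaR f k - ε) :=
      isClosed_Icc.isOpen_compl.mem_nhds hx
    filter_upwards [hev] with z hz
    rw [fsharp_eq_top_of_not_mem hz]
    rw [fsharp_eq_top_of_not_mem hx] at hy
    exact lt_of_lt_of_le hy le_top
/-! ### eInfD / eSupD helpers -/

lemma eInfD_ge {h : ℝ → EReal} {c : ℝ} (hc : ∀ θ ∈ effDom h, c ≤ θ) :
    (c : EReal) ≤ eInfD h := by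
  refine le_sInf ?_
  rintro y ⟨θ, hθ, rfl⟩
  exact EReal.coe_le_coe_iff.2 (hc θ hθ)

lemma eSupD_le {h : ℝ → EReal} {c : ℝ} (hc : ∀ θ ∈ effDom h, θ ≤ c) :
    eSupD h ≤ (c : EReal) := by
  refine sSup_le ?_
  rintro y ⟨θ, hθ, rfl⟩
  exact EReal.coe_le_coe_iff.2 (hc θ hθ)

lemma eInfD_le_of_mem {h : ℝ → EReal} {θ : ℝ} (hθ : θ ∈ effDom h) : eInfD h ≤ (θ : EReal) :=
  sInf_le ⟨θ, hθ, rfl⟩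

lemma le_eSupD_of_mem {h : ℝ → EReal} {θ : ℝ} (hθ : θ ∈ effDom h) : (θ : EReal) ≤ eSupD h :=
  le_sSup ⟨θ, hθ, rfl⟩

/-! ### etaSet bounds -/

lemma zero_mem_etaSet {f : ℝ → EReal} (hf0 : f 0 = 1) (k : ℕ) : (0:ℝ) ∈ etaSet f k := by
  constructor
  · rw [abs_zero]; positivity
  · rw [hf0, ← EReal.coe_one]
    have hk0 : (0:ℝ) ≤ (k:ℝ) := Nat.cast_nonneg k
    exact EReal.coe_lt_coe_iff.2 (by linarith)

lemma etaL_ge {f : ℝ → EReal} (hf0 : f 0 = 1) (k : ℕ) : -(2*(k:ℝ)+2) ≤ etaL f k := by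
  refine le_csInf ⟨0, zero_mem_etaSet hf0 k⟩ ?_
  intro θ hθ
  have := abs_lt.1 hθ.1
  linarith [this.1]

lemma etaR_le {f : ℝ → EReal} (hf0 : f 0 = 1) (k : ℕ) : etaR f k ≤ 2*(k:ℝ)+2 := by
  refine csSup_le ⟨0, zero_mem_etaSet hf0 k⟩ ?_
  intro θ hθ
  have := abs_lt.1 hθ.1
  linarith [this.2]

/-! ### No nice function close to an empty epigraph -/

lemma no_nice_of_epi_empty {h : ℝ → EReal} {k : ℕ} (hk : 1 ≤ k) (hemp : epiE h = ∅)
    {p : ℝ → ℝ} (hp : Nice p) (hmem : ecoe p ∈ Vk k h) : False := by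
  have hkR : (1:ℝ) ≤ (k:ℝ) := by exact_mod_cast hk
  have hk0 : (0:ℝ) ≤ (k:ℝ) := by linarith
  have hx0 : ((0:ℝ), -(k:ℝ)) ∈ closedBall (0:ℝ×ℝ) (k:ℝ) := by
    rw [mem_closedBall, Prod.dist_eq]
    have e1 : dist ((0:ℝ), -(k:ℝ)).1 (0:ℝ×ℝ).1 = 0 := by simp
    have e2 : dist ((0:ℝ), -(k:ℝ)).2 (0:ℝ×ℝ).2 = (k:ℝ) := by
      simp [Real.dist_eq, abs_of_nonneg hk0]
    rw [e1, e2]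
    exact max_le hk0 le_rfl
  have hlow : (k:ℝ) ≤ infDist ((0:ℝ), -(k:ℝ)) (epiE (ecoe p)) := by
    by_contra hcon
    push_neg at hcon
    obtain ⟨y, hy, hdy⟩ := (infDist_lt_iff (epiE_ecoe_nonempty p)).1 hcon
    have hy2 : 0 ≤ y.2 := le_trans (hp.2.2.1 y.1) (mem_epiE_ecoe.1 hy)
    have hge : (k:ℝ) ≤ dist ((0:ℝ), -(k:ℝ)) y := by
      rw [Prod.dist_eq]
      refine le_trans ?_ (le_max_right _ _)
      rw [Real.dist_eq]
      have he : (-(k:ℝ)) - y.2 = -((k:ℝ) + y.2) := by ring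
      rw [he, abs_neg, abs_of_nonneg (by linarith)]
      linarith
    linarith
  have hgap := le_awGap (A := epiE (ecoe p)) (B := epiE h) hx0
  rw [hemp, infDist_empty, sub_zero, abs_of_nonneg infDist_nonneg] at hgap
  have hVk : awGap (epiE (ecoe p)) (epiE h) (k:ℝ) < 1/(k:ℝ) := hmem
  rw [hemp] at hVk
  have h1k : 1/(k:ℝ) ≤ (k:ℝ) := by
    rw [div_le_iff₀ (by linarith)]
    nlinarith
  linarith

/-! ### Nice combination -/

lemma nice_combo {p₁ p₂ : ℝ → ℝ} (hp₁ : Nice p₁) (hp₂ : Nice p₂) {a b : ℝ}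
    (ha : 0 ≤ a) (hb : 0 ≤ b) (hab : a + b = 1) : Nice (fun θ => a * p₁ θ + b * p₂ θ) := by
  obtain ⟨hc₁, hv₁, hn₁, h0₁⟩ := hp₁
  obtain ⟨hc₂, hv₂, hn₂, h0₂⟩ := hp₂
  refine ⟨(continuous_const.mul hc₁).add (continuous_const.mul hc₂), ?_,
    fun θ => add_nonneg (mul_nonneg ha (hn₁ θ)) (mul_nonneg hb (hn₂ θ)), ?_⟩
  · have h := (hv₁.smul ha).add (hv₂.smul hb)
    have he : (fun θ => a * p₁ θ + b * p₂ θ) =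
        ((fun x => a • p₁ x) + fun x => b • p₂ x) := by
      funext θ; simp [smul_eq_mul]
    rw [he]
    exact h
  · show a * p₁ 0 + b * p₂ 0 = 1
    rw [h0₁, h0₂, mul_one, mul_one, hab]

/-! ### Case (a) : H1 and H2 for Ak -/

lemma caseA_H {f : ℝ → EReal} {k : ℕ} {ε : ℝ} (hf : IsAdm0 f) (hf0 : f 0 = 1)
    (hk : 1 ≤ k) (hAdm : Adm f k ε) :
    (∀ p₁ p₂, Nice p₁ → Nice p₂ → ecoe p₁ ∈ Ak f k ε → ecoe p₂ ∈ Ak f k ε →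
      ∀ a b : ℝ, 0 ≤ a → 0 ≤ b → a + b = 1 →
        ecoe (fun θ => a * p₁ θ + b * p₂ θ) ∈ Ak f k ε) ∧
    (∀ p, Nice p → ecoe p ∈ Ak f k ε → ∃ δ : ℝ, 0 < δ ∧ ∀ q, Nice q →
      (∀ θ ∈ Icc (-(2*(k:ℝ)+2)) (2*(k:ℝ)+2), |q θ - p θ| ≤ δ) → ecoe q ∈ Ak f k ε) := by
  have hkR : (1:ℝ) ≤ (k:ℝ) := by exact_mod_cast hk
  rcases eq_empty_or_nonempty (epiE (fsharp f k ε)) with hemp | hBne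
  · constructor
    · intro p₁ p₂ hp₁ hp₂ hm₁ hm₂ a b ha hb hab
      exact absurd hm₁.2.1 (fun hh => no_nice_of_epi_empty hk hemp hp₁ hh)
    · intro p hp hm
      exact absurd hm.2.1 (fun hh => no_nice_of_epi_empty hk hemp hp hh)
  -- nonempty case
  have hdomsub := effDom_fsharp_subset (f := f) (k := k) (ε := ε)
  have hc₁ : ((etaL f k + ε : ℝ) : EReal) ≤ eInfD (fsharp f k ε) :=
    eInfD_ge fun θ hθ => (hdomsub hθ).1
  have hc₂ : eSupD (fsharp f k ε) ≤ ((etaR f k - ε : ℝ) : EReal) :=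
    eSupD_le fun θ hθ => (hdomsub hθ).2
  have hbot : (⊥ : EReal) < eInfD (fsharp f k ε) :=
    lt_of_lt_of_le (EReal.bot_lt_coe _) hc₁
  have htop : eSupD (fsharp f k ε) < ⊤ := lt_of_le_of_lt hc₂ (EReal.coe_lt_top _)
  set K : Set ℝ := {θ : ℝ | eInfD (fsharp f k ε) ≤ (θ:EReal) ∧ (θ:EReal) ≤ eSupD (fsharp f k ε)}
    with hKdef
  have hKIcc : K ⊆ Icc (etaL f k + ε) (etaR f k - ε) := by
    rintro θ ⟨h1, h2⟩
    exact ⟨EReal.coe_le_coe_iff.1 (le_trans hc₁ h1), EReal.coe_le_coe_iff.1 (le_trans h2 hc₂)⟩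
  have hKR : K ⊆ Icc (-(2*(k:ℝ)+2)) (2*(k:ℝ)+2) := by
    intro θ hθ
    have h := hKIcc hθ
    have hL := etaL_ge hf0 k
    have hR := etaR_le hf0 k
    have hε := hAdm.1
    exact ⟨by linarith [h.1], by linarith [h.2]⟩
  have hKcl : IsClosed K := by
    have h1 : IsClosed {θ : ℝ | eInfD (fsharp f k ε) ≤ (θ:EReal)} :=
      isClosed_le continuous_const continuous_coe_real_ereal
    have h2 : IsClosed {θ : ℝ | (θ:EReal) ≤ eSupD (fsharp f k ε)} :=
      isClosed_le continuous_coe_real_ereal continuous_const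
    exact h1.inter h2
  have hKcompact : IsCompact K := isCompact_Icc.of_isClosed_subset hKcl hKR
  have hmemiff : ∀ p : ℝ → ℝ, Nice p →
      (ecoe p ∈ Ak f k ε ↔ awGap (epiE (ecoe p)) (epiE (fsharp f k ε)) (k:ℝ) < 1/(k:ℝ) ∧
        ∀ θ ∈ K, ((p θ : ℝ):EReal) < fsharp f k ε θ) := by
    intro p hp
    constructor
    · rintro ⟨-, hvk, hlll⟩
      exact ⟨hvk, fun θ hθ => hlll.2.2 θ hθ.1 hθ.2⟩
    · rintro ⟨hvk, hKc⟩
      refine ⟨nice_isAdm0 hp, hvk, ?_, ?_, ?_⟩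
      · rw [eInfD_ecoe]; exact hbot
      · rw [eSupD_ecoe]; exact htop
      · intro θ h1 h2; exact hKc θ ⟨h1, h2⟩
  have hepiB : ∀ p : ℝ → ℝ, (∀ θ ∈ K, ((p θ:ℝ):EReal) < fsharp f k ε θ) →
      epiE (fsharp f k ε) ⊆ epiE (ecoe p) := by
    intro p hKc x hx
    have hxe : fsharp f k ε x.1 ≤ (x.2 : EReal) := hx
    have hxd : x.1 ∈ effDom (fsharp f k ε) :=
      lt_of_le_of_lt hxe (EReal.coe_lt_top _)
    have hxK : x.1 ∈ K := ⟨eInfD_le_of_mem hxd, le_eSupD_of_mem hxd⟩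
    have := lt_of_lt_of_le (hKc x.1 hxK) hxe
    exact mem_epiE_ecoe.2 (EReal.coe_lt_coe_iff.1 this).le
  constructor
  · intro p₁ p₂ hp₁ hp₂ hm₁ hm₂ a b ha hb hab
    obtain ⟨hg₁, hK₁⟩ := (hmemiff p₁ hp₁).1 hm₁
    obtain ⟨hg₂, hK₂⟩ := (hmemiff p₂ hp₂).1 hm₂
    refine (hmemiff _ (nice_combo hp₁ hp₂ ha hb hab)).2 ⟨?_, ?_⟩
    · exact lt_of_le_of_lt
        (awGap_combo ha hb hab hBne (hepiB p₁ hK₁) (hepiB p₂ hK₂) (by linarith))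
        (max_lt hg₁ hg₂)
    · intro θ hθ
      exact ereal_combo_lt ha hb hab (hK₁ θ hθ) (hK₂ θ hθ)
  · intro p hp hm
    obtain ⟨hgap, hKc⟩ := (hmemiff p hp).1 hm
    obtain ⟨δ₂, hδ₂, hmar⟩ := lsc_margin (fsharp_lsc hf.1 hf.2.2 k ε) hp.1 hKcompact hKc
    set δ : ℝ := min ((1/(k:ℝ) - awGap (epiE (ecoe p)) (epiE (fsharp f k ε)) (k:ℝ))/2) (δ₂/2)
      with hδdef
    have hδpos : 0 < δ := lt_min (by linarith) (by linarith)
    refine ⟨δ, hδpos, ?_⟩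
    intro q hq hclose
    have hperturb := awGap_perturb hq.2.2.2 hp.2.2.2 hkR hδpos.le hclose (epiE (fsharp f k ε))
    refine (hmemiff q hq).2 ⟨?_, ?_⟩
    · have h1 : δ ≤ (1/(k:ℝ) - awGap (epiE (ecoe p)) (epiE (fsharp f k ε)) (k:ℝ))/2 :=
        min_le_left _ _
      linarith
    · intro θ hθ
      have hcl := hclose θ (hKR hθ)
      have h2 : δ ≤ δ₂/2 := min_le_right _ _
      have h3 : q θ < p θ + δ₂ := by
        have := abs_le.1 hcl
        linarith [this.2]
      exact lt_trans (EReal.coe_lt_coe_iff.2 h3) (hmar θ hθ)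

/-! ### Case (b) : H1 and H2 for Vk -/

lemma caseB_H {f : ℝ → EReal} {k : ℕ} (hf0 : f 0 = 1) (hft : ∀ θ : ℝ, θ ≠ 0 → f θ = ⊤)
    (hk : 1 ≤ k) :
    (∀ p₁ p₂, Nice p₁ → Nice p₂ → ecoe p₁ ∈ Vk k f → ecoe p₂ ∈ Vk k f →
      ∀ a b : ℝ, 0 ≤ a → 0 ≤ b → a + b = 1 →
        ecoe (fun θ => a * p₁ θ + b * p₂ θ) ∈ Vk k f) ∧
    (∀ p, Nice p → ecoe p ∈ Vk k f → ∃ δ : ℝ, 0 < δ ∧ ∀ q, Nice q →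
      (∀ θ ∈ Icc (-(2*(k:ℝ)+2)) (2*(k:ℝ)+2), |q θ - p θ| ≤ δ) → ecoe q ∈ Vk k f) := by
  have hkR : (1:ℝ) ≤ (k:ℝ) := by exact_mod_cast hk
  have hBne : (epiE f).Nonempty := by
    refine ⟨(0, 1), ?_⟩
    show f 0 ≤ ((1:ℝ):EReal)
    rw [hf0, EReal.coe_one]
  have hsub : ∀ p : ℝ → ℝ, p 0 = 1 → epiE f ⊆ epiE (ecoe p) := by
    intro p hp0 x hx
    have hxe : f x.1 ≤ (x.2 : EReal) := hx
    by_cases h1 : x.1 = 0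
    · rw [h1, hf0, ← EReal.coe_one] at hxe
      refine mem_epiE_ecoe.2 ?_
      rw [h1, hp0]
      exact EReal.coe_le_coe_iff.1 hxe
    · rw [hft x.1 h1] at hxe
      exact absurd hxe (EReal.coe_lt_top x.2).not_ge
  constructor
  · intro p₁ p₂ hp₁ hp₂ hm₁ hm₂ a b ha hb hab
    have hg₁ : awGap (epiE (ecoe p₁)) (epiE f) (k:ℝ) < 1/(k:ℝ) := hm₁
    have hg₂ : awGap (epiE (ecoe p₂)) (epiE f) (k:ℝ) < 1/(k:ℝ) := hm₂
    show awGap (epiE (ecoe (fun θ => a * p₁ θ + b * p₂ θ))) (epiE f) (k:ℝ) < 1/(k:ℝ)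
    exact lt_of_le_of_lt
      (awGap_combo ha hb hab hBne (hsub p₁ hp₁.2.2.2) (hsub p₂ hp₂.2.2.2) (by linarith))
      (max_lt hg₁ hg₂)
  · intro p hp hm
    have hgap : awGap (epiE (ecoe p)) (epiE f) (k:ℝ) < 1/(k:ℝ) := hm
    refine ⟨(1/(k:ℝ) - awGap (epiE (ecoe p)) (epiE f) (k:ℝ))/2, by linarith, ?_⟩
    intro q hq hclose
    have hperturb := awGap_perturb hq.2.2.2 hp.2.2.2 hkR (by linarith) hclose (epiE f)
    show awGap (epiE (ecoe q)) (epiE f) (k:ℝ) < 1/(k:ℝ)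
    linarith
/-! ### Empirical mgf functions -/

def empR (n : ℕ) (x : Fin n → ℝ) : ℝ → ℝ := fun θ => (n:ℝ)⁻¹ * ∑ i, Real.exp (θ * x i)

lemma empR_cont (n : ℕ) (x : Fin n → ℝ) : Continuous (empR n x) := by
  apply continuous_const.mul
  exact continuous_finset_sum _ fun i _ =>
    Real.continuous_exp.comp (continuous_id.mul continuous_const)

lemma empR_nonneg (n : ℕ) (x : Fin n → ℝ) (θ : ℝ) : 0 ≤ empR n x θ := by
  unfold empR
  positivity

lemma empR_zero {n : ℕ} (hn : 1 ≤ n) (x : Fin n → ℝ) : empR n x 0 = 1 := by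
  have hn0 : (n:ℝ) ≠ 0 := Nat.cast_ne_zero.2 (by omega)
  simp [empR, Finset.card_univ, hn0]

lemma empR_convex (n : ℕ) (x : Fin n → ℝ) : ConvexOn ℝ univ (empR n x) := by
  refine ⟨convex_univ, ?_⟩
  intro θ₁ _ θ₂ _ a b ha hb hab
  simp only [empR, smul_eq_mul]
  have key : ∀ i : Fin n, Real.exp ((a*θ₁+b*θ₂) * x i) ≤
      a * Real.exp (θ₁ * x i) + b * Real.exp (θ₂ * x i) := by
    intro i
    have h := convexOn_exp.2 (mem_univ (θ₁ * x i)) (mem_univ (θ₂ * x i)) ha hb hab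
    simp only [smul_eq_mul] at h
    have harg : (a*θ₁+b*θ₂) * x i = a*(θ₁ * x i) + b*(θ₂ * x i) := by ring
    rw [harg]; exact h
  have hinv : (0:ℝ) ≤ (n:ℝ)⁻¹ := by positivity
  calc (n:ℝ)⁻¹ * ∑ i, Real.exp ((a*θ₁+b*θ₂) * x i)
      ≤ (n:ℝ)⁻¹ * ∑ i, (a * Real.exp (θ₁ * x i) + b * Real.exp (θ₂ * x i)) :=
        mul_le_mul_of_nonneg_left (Finset.sum_le_sum fun i _ => key i) hinv
    _ = a * ((n:ℝ)⁻¹ * ∑ i, Real.exp (θ₁ * x i)) + b * ((n:ℝ)⁻¹ * ∑ i, Real.exp (θ₂ * x i)) := by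
        rw [Finset.sum_add_distrib, ← Finset.mul_sum, ← Finset.mul_sum]; ring

lemma nice_empR {n : ℕ} (hn : 1 ≤ n) (x : Fin n → ℝ) : Nice (empR n x) :=
  ⟨empR_cont n x, empR_convex n x, empR_nonneg n x, empR_zero hn x⟩

lemma Mn_eq {Ω : Type*} (X : ℕ → Ω → ℝ) (n : ℕ) (ω : Ω) :
    Mn X n ω = ecoe (empR n (fun i : Fin n => X (i : ℕ) ω)) := by
  funext θ
  simp only [Mn, ecoe, empR]
  rw [Finset.sum_range (fun i => Real.exp (θ * X i ω))]

/-! ### sum helpers -/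

lemma sum_range_add' (f : ℕ → ℝ) (n m : ℕ) :
    ∑ i ∈ Finset.range (n+m), f i =
      ∑ i ∈ Finset.range n, f i + ∑ i ∈ Finset.range m, f (n+i) := by
  induction m with
  | zero => simp
  | succ m ih =>
      have h1 : n + (m+1) = (n+m)+1 := by omega
      rw [h1, Finset.sum_range_succ, ih, Finset.sum_range_succ]
      ring

lemma sum_mod_cycle (g : ℕ → ℝ) (N q : ℕ) :
    ∑ i ∈ Finset.range (q*N), g (i % N) = (q:ℝ) * ∑ j ∈ Finset.range N, g j := by
  induction q with
  | zero => simp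
  | succ q ih =>
      have h1 : (q+1)*N = q*N + N := by ring
      rw [h1, sum_range_add' _ (q*N) N, ih]
      have h2 : ∀ i ∈ Finset.range N, g ((q*N + i) % N) = g i := by
        intro i hi
        have hiN := Finset.mem_range.1 hi
        rw [Nat.add_comm, Nat.add_mul_mod_self_right, Nat.mod_eq_of_lt hiN]
      rw [Finset.sum_congr rfl h2]
      push_cast
      ring

/-! ### Exponential perturbation estimates -/

lemma exp_close {a t : ℝ} (ht : |t| ≤ 1) :
    |Real.exp (a + t) - Real.exp a| ≤ 2 * Real.exp a * |t| := by
  have h := Real.abs_exp_sub_one_le ht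
  have he : Real.exp (a+t) - Real.exp a = Real.exp a * (Real.exp t - 1) := by
    rw [Real.exp_add]; ring
  rw [he, abs_mul, abs_of_pos (Real.exp_pos a)]
  calc Real.exp a * |Real.exp t - 1| ≤ Real.exp a * (2 * |t|) :=
        mul_le_mul_of_nonneg_left h (Real.exp_pos a).le
    _ = 2 * Real.exp a * |t| := by ring

lemma empR_unif_close {n : ℕ} (hn : 1 ≤ n) (x₀ : Fin n → ℝ) {R η : ℝ} (hR : 1 ≤ R)
    (hη : 0 < η) :
    ∃ ρ : ℝ, 0 < ρ ∧ ∀ x : Fin n → ℝ, (∀ i, |x i - x₀ i| < ρ) →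
      ∀ θ ∈ Icc (-R) R, |empR n x θ - empR n x₀ θ| ≤ η := by
  haveI : Nonempty (Fin n) := Fin.pos_iff_nonempty.1 (by omega)
  set M : ℝ := Finset.univ.sup' Finset.univ_nonempty (fun i : Fin n => |x₀ i|) with hM
  have hM0 : 0 ≤ M := by
    obtain ⟨i⟩ := (inferInstance : Nonempty (Fin n))
    exact le_trans (abs_nonneg (x₀ i))
      (Finset.le_sup' (fun j : Fin n => |x₀ j|) (Finset.mem_univ i))
  set D : ℝ := 2 * Real.exp (R * M + 1) * R with hD
  have hD0 : 0 < D := by positivity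
  set ρ : ℝ := min (1/R) (η/D) with hρ
  have hρ0 : 0 < ρ := lt_min (by positivity) (by positivity)
  refine ⟨ρ, hρ0, ?_⟩
  intro x hx θ hθ
  have hθR : |θ| ≤ R := abs_le.2 ⟨hθ.1, hθ.2⟩
  have key : ∀ i : Fin n, |Real.exp (θ * x i) - Real.exp (θ * x₀ i)| ≤ D * ρ := by
    intro i
    have hxi : |x i - x₀ i| ≤ ρ := (hx i).le
    have ht : |θ * x i - θ * x₀ i| ≤ R * ρ := by
      rw [← mul_sub, abs_mul]
      exact mul_le_mul hθR hxi (abs_nonneg _) (by linarith)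
    have hRρ : R * ρ ≤ 1 := by
      have : ρ ≤ 1/R := min_le_left _ _
      rw [← mul_le_mul_iff_right₀ (show (0:ℝ) < R by linarith)] at this
      calc R * ρ ≤ R * (1/R) := mul_le_mul_of_nonneg_left (min_le_left _ _) (by linarith)
        _ = 1 := by field_simp
    have ht1 : |θ * x i - θ * x₀ i| ≤ 1 := le_trans ht hRρ
    have harg : θ * x i = θ * x₀ i + (θ * x i - θ * x₀ i) := by ring
    rw [harg]
    refine le_trans (exp_close ht1) ?_
    have hea : Real.exp (θ * x₀ i) ≤ Real.exp (R * M + 1) := by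
      apply Real.exp_le_exp.2
      have h1 : θ * x₀ i ≤ |θ| * |x₀ i| := le_trans (le_abs_self _) (abs_mul θ (x₀ i)).le
      have hMi : |x₀ i| ≤ M := Finset.le_sup' (fun j : Fin n => |x₀ j|) (Finset.mem_univ i)
      have h2 : |θ| * |x₀ i| ≤ R * M := mul_le_mul hθR hMi (abs_nonneg _) (by linarith)
      linarith
    calc 2 * Real.exp (θ * x₀ i) * |θ * x i - θ * x₀ i|
        ≤ 2 * Real.exp (R * M + 1) * (R * ρ) := by
          apply mul_le_mul _ ht (abs_nonneg _) (by positivity)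
          linarith
      _ = D * ρ := by rw [hD]; ring
  have hsum : |empR n x θ - empR n x₀ θ| ≤
      (n:ℝ)⁻¹ * ∑ i, |Real.exp (θ * x i) - Real.exp (θ * x₀ i)| := by
    unfold empR
    rw [← mul_sub, ← Finset.sum_sub_distrib, abs_mul, abs_of_nonneg (by positivity : (0:ℝ) ≤ (n:ℝ)⁻¹)]
    exact mul_le_mul_of_nonneg_left (Finset.abs_sum_le_sum_abs _ _) (by positivity)
  have hn0 : (0:ℝ) < (n:ℝ) := by exact_mod_cast (by omega : 0 < n)
  calc |empR n x θ - empR n x₀ θ|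
      ≤ (n:ℝ)⁻¹ * ∑ i : Fin n, |Real.exp (θ * x i) - Real.exp (θ * x₀ i)| := hsum
    _ ≤ (n:ℝ)⁻¹ * ∑ _i : Fin n, D * ρ :=
        mul_le_mul_of_nonneg_left (Finset.sum_le_sum fun i _ => key i) (by positivity)
    _ = D * ρ := by
        rw [Finset.sum_const, Finset.card_univ, Fintype.card_fin, nsmul_eq_mul]
        field_simp
    _ ≤ D * (η/D) := mul_le_mul_of_nonneg_left (min_le_right _ _) hD0.le
    _ = η := by field_simp
/-! ### Tuple maps, laws, independence -/

section Prob

variable {Ω : Type*} [MeasurableSpace Ω]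

def tup (X : ℕ → Ω → ℝ) (a n : ℕ) : Ω → (Fin n → ℝ) := fun ω i => X (a + (i:ℕ)) ω

lemma tup_measurable {X : ℕ → Ω → ℝ} (hmeas : ∀ i, Measurable (X i)) (a n : ℕ) :
    Measurable (tup X a n) :=
  measurable_pi_lambda _ fun _ => hmeas _

lemma prob_subsingleton_eq {α : Type*} [MeasurableSpace α] [Subsingleton α]
    (ν₁ ν₂ : Measure α) [IsProbabilityMeasure ν₁] [IsProbabilityMeasure ν₂] : ν₁ = ν₂ := by
  ext s hs
  rcases Set.eq_empty_or_nonempty s with h | ⟨y, hy⟩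
  · simp [h]
  · have hu : s = Set.univ := by
      apply Set.eq_univ_of_forall
      intro z
      rwa [Subsingleton.elim z y]
    rw [hu, measure_univ, measure_univ]

variable (P : Measure Ω) [IsProbabilityMeasure P]

lemma indep_blocks {X : ℕ → Ω → ℝ} (hmeas : ∀ i, Measurable (X i))
    (hindep : ProbabilityTheory.iIndepFun X P)
    (a n b m : ℕ) (hab : a + n ≤ b) :
    ProbabilityTheory.IndepFun (tup X a n) (tup X b m) P := by
  set S : Finset ℕ := Finset.Ico a (a+n) with hS
  set T : Finset ℕ := Finset.Ico b (b+m) with hT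
  have hdisj : Disjoint S T := by
    rw [Finset.disjoint_left]
    intro x hx hx'
    rw [hS, Finset.mem_Ico] at hx
    rw [hT, Finset.mem_Ico] at hx'
    omega
  have base := hindep.indepFun_finset S T hdisj hmeas
  set φ : ({ x // x ∈ S } → ℝ) → (Fin n → ℝ) :=
    fun v j => v ⟨a + (j:ℕ), by rw [hS, Finset.mem_Ico]; omega⟩ with hφdef
  set ψ : ({ x // x ∈ T } → ℝ) → (Fin m → ℝ) :=
    fun v j => v ⟨b + (j:ℕ), by rw [hT, Finset.mem_Ico]; omega⟩ with hψdef
  have hφ : Measurable φ := measurable_pi_lambda _ fun _ => measurable_pi_apply _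
  have hψ : Measurable ψ := measurable_pi_lambda _ fun _ => measurable_pi_apply _
  have h := base.comp hφ hψ
  have e1 : φ ∘ (fun ω (i : { x // x ∈ S }) => X (i:ℕ) ω) = tup X a n := rfl
  have e2 : ψ ∘ (fun ω (i : { x // x ∈ T }) => X (i:ℕ) ω) = tup X b m := rfl
  rwa [e1, e2] at h

lemma indep_head {X : ℕ → Ω → ℝ} (hmeas : ∀ i, Measurable (X i))
    (hindep : ProbabilityTheory.iIndepFun X P)
    (a n : ℕ) : ProbabilityTheory.IndepFun (X a) (tup X (a+1) n) P := by
  have h := indep_blocks P hmeas hindep a 1 (a+1) n le_rfl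
  set φ : (Fin 1 → ℝ) → ℝ := fun v => v 0 with hφdef
  have hφ : Measurable φ := measurable_pi_apply _
  have hc := h.comp hφ measurable_id
  have e1 : φ ∘ tup X a 1 = X a := by
    funext ω
    show X (a + ((0 : Fin 1):ℕ)) ω = X a ω
    norm_num
  rwa [e1, Function.id_comp] at hc

lemma tup_law {X : ℕ → Ω → ℝ} (μ : Measure ℝ) [IsProbabilityMeasure μ]
    (hmeas : ∀ i, Measurable (X i))
    (hid : ∀ i, Measure.map (X i) P = μ)
    (hindep : ProbabilityTheory.iIndepFun X P) :
    ∀ (n a : ℕ), Measure.map (tup X a n) P = Measure.pi (fun _ : Fin n => μ) := by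
  intro n
  induction n with
  | zero =>
      intro a
      haveI : Subsingleton (Fin 0 → ℝ) := ⟨fun f g => funext fun i => absurd i.2 (by omega)⟩
      haveI : IsProbabilityMeasure (Measure.map (tup X a 0) P) :=
        Measure.isProbabilityMeasure_map (tup_measurable hmeas a 0).aemeasurable
      exact prob_subsingleton_eq _ _
  | succ n ih =>
      intro a
      set e := MeasurableEquiv.piFinSuccAbove (fun _ : Fin (n+1) => ℝ) 0 with hedef
      have hpair : Measurable (fun ω => (X a ω, tup X (a+1) n ω)) :=
        (hmeas a).prodMk (tup_measurable hmeas (a+1) n)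
      have hcomp : tup X a (n+1) = ⇑e.symm ∘ (fun ω => (X a ω, tup X (a+1) n ω)) := by
        funext ω
        have key : e (tup X a (n+1) ω) = (X a ω, tup X (a+1) n ω) := by
          show ((tup X a (n+1) ω) 0, fun j : Fin n => tup X a (n+1) ω ((0 : Fin (n+1)).succAbove j))
            = (X a ω, tup X (a+1) n ω)
          refine Prod.ext ?_ ?_
          · show X (a + ((0 : Fin (n+1)):ℕ)) ω = X a ω
            norm_num
          · funext j
            show X (a + (((0 : Fin (n+1)).succAbove j : Fin (n+1)):ℕ)) ω = X ((a+1) + (j:ℕ)) ω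
            rw [Fin.zero_succAbove, Fin.val_succ]
            congr 1
            omega
        have h := congrArg e.symm key
        rw [e.symm_apply_apply] at h
        exact h
      have hmap1 : Measure.map (fun ω => (X a ω, tup X (a+1) n ω)) P =
          μ.prod (Measure.pi (fun _ : Fin n => μ)) := by
        rw [(ProbabilityTheory.indepFun_iff_map_prod_eq_prod_map_map (hmeas a).aemeasurable
          (tup_measurable hmeas (a+1) n).aemeasurable).1 (indep_head P hmeas hindep a n),
          hid a, ih (a+1)]
      have mp := measurePreserving_piFinSuccAbove (fun _ : Fin (n+1) => μ) 0
      calc Measure.map (tup X a (n+1)) P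
          = Measure.map (⇑e.symm ∘ (fun ω => (X a ω, tup X (a+1) n ω))) P := by rw [hcomp]
        _ = Measure.map ⇑e.symm (Measure.map (fun ω => (X a ω, tup X (a+1) n ω)) P) :=
            (Measure.map_map e.symm.measurable hpair).symm
        _ = Measure.map ⇑e.symm (μ.prod (Measure.pi (fun _ : Fin n => μ))) := by rw [hmap1]
        _ = Measure.pi (fun _ : Fin (n+1) => μ) := (mp.symm e).map_eq

end Prob
/-! ### Support of a measure on ℝ -/

def suppS (μ : Measure ℝ) : Set ℝ := {c : ℝ | ∀ r : ℝ, 0 < r → 0 < μ (Metric.ball c r)}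

lemma suppS_compl_null (μ : Measure ℝ) : μ (suppS μ)ᶜ = 0 := by
  classical
  set T : Set (ℚ × ℚ) := {p | μ (Metric.ball ((p.1:ℝ)) ((p.2:ℝ))) = 0} with hT
  have hsub : (suppS μ)ᶜ ⊆ ⋃ p ∈ T, Metric.ball ((p.1:ℝ)) ((p.2:ℝ)) := by
    intro c hc
    simp only [suppS, mem_compl_iff, mem_setOf_eq, not_forall] at hc
    obtain ⟨r, hr, hnull⟩ := hc
    have hr0 : 0 < r := hr
    have hnull' : μ (Metric.ball c r) = 0 := by
      by_contra h
      exact hnull (pos_iff_ne_zero.2 h)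
    obtain ⟨q₁, hq₁⟩ := exists_rat_near c (show (0:ℝ) < r/4 by linarith)
    obtain ⟨q₂, hq₂l, hq₂r⟩ := exists_rat_btwn (show (r/4 : ℝ) < r/2 by linarith)
    have hball : Metric.ball ((q₁:ℝ)) ((q₂:ℝ)) ⊆ Metric.ball c r := by
      intro z hz
      rw [Metric.mem_ball, Real.dist_eq] at hz ⊢
      have h1 : |c - (q₁:ℝ)| < r/4 := hq₁
      have : |z - c| ≤ |z - (q₁:ℝ)| + |(q₁:ℝ) - c| := abs_sub_le _ _ _
      rw [abs_sub_comm (q₁:ℝ) c] at this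
      linarith
    refine mem_biUnion (show (q₁, q₂) ∈ T from ?_) ?_
    · exact measure_mono_null hball hnull'
    · rw [Metric.mem_ball, Real.dist_eq]
      have h1 : |c - (q₁:ℝ)| < r/4 := hq₁
      linarith
  refine measure_mono_null hsub ?_
  rw [measure_biUnion_null_iff (Set.to_countable T)]
  intro p hp
  exact hp

lemma pi_suppS_compl_null (μ : Measure ℝ) [IsProbabilityMeasure μ] (N : ℕ) :
    Measure.pi (fun _ : Fin N => μ) (univ.pi fun _ : Fin N => suppS μ)ᶜ = 0 := by
  have hsub : (univ.pi fun _ : Fin N => suppS μ)ᶜ ⊆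
      ⋃ i : Fin N, Function.eval i ⁻¹' (suppS μ)ᶜ := by
    intro v hv
    simp only [mem_compl_iff, Set.mem_pi, mem_univ, forall_const, not_forall] at hv
    obtain ⟨i, hi⟩ := hv
    exact mem_iUnion.2 ⟨i, hi⟩
  exact measure_mono_null hsub (measure_iUnion_null fun i =>
    Measure.pi_eval_preimage_null _ (suppS_compl_null μ))
/-! ### Pattern construction for positivity propagation -/

lemma pattern_estimate {N : ℕ} (hN : 1 ≤ N) (x : Fin N → ℝ) {R : ℝ} (hR : 1 ≤ R) :
    ∃ D : ℝ, 0 < D ∧ ∀ n : ℕ, 1 ≤ n → ∃ y : Fin n → ℝ,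
      (∀ i, ∃ j, y i = x j) ∧
      ∀ θ ∈ Icc (-R) R, |empR n y θ - empR N x θ| ≤ D / (n:ℝ) := by
  have hNpos : 0 < N := hN
  set Tb : ℝ := ∑ j : Fin N, Real.exp (R * |x j|) with hTb
  set eb : ℝ := Real.exp (R * |x ⟨0, hNpos⟩|) with heb
  set D : ℝ := Tb + (N:ℝ) * eb with hD
  have hTb0 : 0 ≤ Tb := Finset.sum_nonneg fun j _ => (Real.exp_pos _).le
  have hD0 : 0 < D := by positivity
  refine ⟨D, hD0, ?_⟩
  intro n hn
  set q : ℕ := n / N with hq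
  set r : ℕ := n % N with hr
  set x' : ℕ → ℝ := fun j => x ⟨j % N, Nat.mod_lt _ hNpos⟩ with hx'
  have hx'per : ∀ i : ℕ, x' (i % N) = x' i := by
    intro i
    simp only [hx']
    congr 1
    exact Fin.ext (Nat.mod_mod_of_dvd i dvd_rfl)
  set Y : ℕ → ℝ := fun i => if i < q*N then x' i else x' 0 with hY
  set y : Fin n → ℝ := fun i => Y (i:ℕ) with hy
  refine ⟨y, ?_, ?_⟩
  · intro i
    simp only [hy, hY, hx']
    split <;> exact ⟨_, rfl⟩
  intro θ hθ
  have hqn : q*N + r = n := by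
    rw [hq, hr, Nat.mul_comm]
    exact Nat.div_add_mod n N
  set T : ℝ := ∑ j : Fin N, Real.exp (θ * x j) with hT
  set e₀ : ℝ := Real.exp (θ * x' 0) with he₀
  -- empirical identity
  have hsum : ∑ i : Fin n, Real.exp (θ * y i) = (q:ℝ) * T + (r:ℝ) * e₀ := by
    rw [← Finset.sum_range (fun i => Real.exp (θ * Y i))]
    rw [← hqn, sum_range_add' (fun i => Real.exp (θ * Y i)) (q*N) r]
    have h2 : ∑ i ∈ Finset.range r, Real.exp (θ * Y (q*N + i)) = (r:ℝ) * e₀ := by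
      have : ∀ i ∈ Finset.range r, Real.exp (θ * Y (q*N + i)) = e₀ := by
        intro i hi
        simp only [hY, he₀]
        rw [if_neg (by omega)]
      rw [Finset.sum_congr rfl this, Finset.sum_const, Finset.card_range, nsmul_eq_mul]
    have h1 : ∑ i ∈ Finset.range (q*N), Real.exp (θ * Y i) = (q:ℝ) * T := by
      have hc : ∀ i ∈ Finset.range (q*N), Real.exp (θ * Y i) = Real.exp (θ * x' (i % N)) := by
        intro i hi
        simp only [hY]
        rw [if_pos (Finset.mem_range.1 hi), hx'per]
      rw [Finset.sum_congr rfl hc,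
        sum_mod_cycle (fun j => Real.exp (θ * x' j)) N q]
      congr 1
      rw [Finset.sum_range (fun j => Real.exp (θ * x' j))]
      apply Finset.sum_congr rfl
      intro j _
      have hxj : x' (j:ℕ) = x j := by
        simp only [hx']
        congr 1
        exact Fin.ext (Nat.mod_eq_of_lt j.2)
      rw [hxj]
    rw [h1, h2]
  have hn0 : (0:ℝ) < (n:ℝ) := by exact_mod_cast (by omega : 0 < n)
  have hN0 : (0:ℝ) < (N:ℝ) := by exact_mod_cast hNpos
  have hqnR : (q:ℝ)*(N:ℝ) + (r:ℝ) = (n:ℝ) := by exact_mod_cast hqn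
  have hkey : empR n y θ - empR N x θ = ((r:ℝ)/(n:ℝ)) * e₀ - ((r:ℝ)/((n:ℝ)*(N:ℝ))) * T := by
    unfold empR
    rw [hsum]
    have hTfin : ∑ i : Fin N, Real.exp (θ * x i) = T := rfl
    rw [hTfin, ← hqnR]
    have hden : (q:ℝ)*(N:ℝ) + (r:ℝ) ≠ 0 := by rw [hqnR]; exact ne_of_gt hn0
    field_simp
    ring
  have hrN : (r:ℝ) ≤ (N:ℝ) := by
    have : r < N := Nat.mod_lt n hNpos
    exact_mod_cast this.le
  have hr0 : (0:ℝ) ≤ (r:ℝ) := Nat.cast_nonneg r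
  have hTbd : T ≤ Tb := by
    apply Finset.sum_le_sum
    intro j _
    apply Real.exp_le_exp.2
    have h1 : θ * x j ≤ |θ| * |x j| := le_trans (le_abs_self _) (abs_mul θ (x j)).le
    have h2 : |θ| ≤ R := abs_le.2 ⟨hθ.1, hθ.2⟩
    nlinarith [abs_nonneg (x j)]
  have hebd : e₀ ≤ eb := by
    apply Real.exp_le_exp.2
    have h1 : θ * x' 0 ≤ |θ| * |x' 0| := le_trans (le_abs_self _) (abs_mul θ (x' 0)).le
    have h2 : |θ| ≤ R := abs_le.2 ⟨hθ.1, hθ.2⟩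
    have h3 : x' 0 = x ⟨0, hNpos⟩ := by
      simp only [hx']
      congr 1
    rw [← h3]
    nlinarith [abs_nonneg (x' 0)]
  have he₀0 : 0 ≤ e₀ := (Real.exp_pos _).le
  have hT0 : 0 ≤ T := Finset.sum_nonneg fun j _ => (Real.exp_pos _).le
  rw [hkey]
  have habs : |((r:ℝ)/(n:ℝ)) * e₀ - ((r:ℝ)/((n:ℝ)*(N:ℝ))) * T| ≤
      ((r:ℝ)/(n:ℝ)) * e₀ + ((r:ℝ)/((n:ℝ)*(N:ℝ))) * T := by
    refine le_trans (abs_sub _ _) ?_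
    have e1 : |((r:ℝ)/(n:ℝ)) * e₀| = ((r:ℝ)/(n:ℝ)) * e₀ :=
      abs_of_nonneg (mul_nonneg (div_nonneg hr0 hn0.le) he₀0)
    have e2 : |((r:ℝ)/((n:ℝ)*(N:ℝ))) * T| = ((r:ℝ)/((n:ℝ)*(N:ℝ))) * T :=
      abs_of_nonneg (mul_nonneg (div_nonneg hr0 (by positivity)) hT0)
    rw [e1, e2]
  refine le_trans habs ?_
  have hb1 : ((r:ℝ)/(n:ℝ)) * e₀ ≤ ((N:ℝ) * eb) / (n:ℝ) := by
    rw [div_mul_eq_mul_div]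
    apply div_le_div_of_nonneg_right ?_ hn0.le
    exact mul_le_mul hrN hebd he₀0 (by linarith)
  have hb2 : ((r:ℝ)/((n:ℝ)*(N:ℝ))) * T ≤ Tb / (n:ℝ) := by
    rw [div_mul_eq_mul_div]
    have h1 : (r:ℝ) * T ≤ (N:ℝ) * Tb := mul_le_mul hrN hTbd hT0 (by linarith)
    calc (r:ℝ) * T / ((n:ℝ)*(N:ℝ)) ≤ (N:ℝ) * Tb / ((n:ℝ)*(N:ℝ)) := by
          apply div_le_div_of_nonneg_right h1 (by positivity)
      _ = Tb / (n:ℝ) := by field_simp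
  calc ((r:ℝ)/(n:ℝ)) * e₀ + ((r:ℝ)/((n:ℝ)*(N:ℝ))) * T
      ≤ ((N:ℝ) * eb) / (n:ℝ) + Tb / (n:ℝ) := add_le_add hb1 hb2
    _ = D / (n:ℝ) := by rw [hD]; field_simp; ring
lemma elog_zero : elog 0 = ⊥ := if_pos rfl

lemma elog_of_ne {p : ℝ≥0∞} (h : p ≠ 0) :
    elog p = ((Real.log p.toReal : ℝ) : EReal) := if_neg h

/-! ### The generic superadditivity limit theorem -/

theorem generic_limit {Ω : Type*} [MeasurableSpace Ω] (P : Measure Ω) [IsProbabilityMeasure P]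
    (X : ℕ → Ω → ℝ) (μ : Measure ℝ) [IsProbabilityMeasure μ]
    (hmeas : ∀ i, Measurable (X i))
    (hid : ∀ i, Measure.map (X i) P = μ)
    (hindep : ProbabilityTheory.iIndepFun X P)
    (𝒜 : Set (ℝ → EReal)) (k : ℕ) (hk : 1 ≤ k)
    (H2 : ∀ p₁ p₂, Nice p₁ → Nice p₂ → ecoe p₁ ∈ 𝒜 → ecoe p₂ ∈ 𝒜 →
      ∀ a b : ℝ, 0 ≤ a → 0 ≤ b → a + b = 1 → ecoe (fun θ => a * p₁ θ + b * p₂ θ) ∈ 𝒜)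
    (H1 : ∀ p, Nice p → ecoe p ∈ 𝒜 → ∃ δ : ℝ, 0 < δ ∧ ∀ q, Nice q →
      (∀ θ ∈ Icc (-(2*(k:ℝ)+2)) (2*(k:ℝ)+2), |q θ - p θ| ≤ δ) → ecoe q ∈ 𝒜) :
    Tendsto (fun n : ℕ => (((n : ℝ)⁻¹ : ℝ) : EReal) * elog (P {ω | Mn X n ω ∈ 𝒜})) atTop
      (nhds (⨆ n ∈ Set.Ici (1:ℕ), (((n : ℝ)⁻¹ : ℝ) : EReal) * elog (P {ω | Mn X n ω ∈ 𝒜}))) ∧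
    (⨆ n ∈ Set.Ici (1:ℕ), (((n : ℝ)⁻¹ : ℝ) : EReal) * elog (P {ω | Mn X n ω ∈ 𝒜})) ≤ 0 := by
  classical
  have hkR : (1:ℝ) ≤ (k:ℝ) := by exact_mod_cast hk
  set U : (n : ℕ) → Set (Fin n → ℝ) := fun n => {x : Fin n → ℝ | ecoe (empR n x) ∈ 𝒜}
    with hUdef
  set E : ℕ → Set Ω := fun n => {ω | Mn X n ω ∈ 𝒜} with hEdef
  have htup0 : ∀ (n : ℕ) (ω : Ω), tup X 0 n ω = (fun i : Fin n => X (i:ℕ) ω) := by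
    intro n ω
    funext i
    show X (0 + (i:ℕ)) ω = X (i:ℕ) ω
    rw [Nat.zero_add]
  have hEeq : ∀ n, E n = tup X 0 n ⁻¹' U n := by
    intro n
    ext ω
    simp only [hEdef, hUdef, mem_setOf_eq, mem_preimage]
    rw [Mn_eq X n ω, htup0 n ω]
  have hUopen : ∀ n : ℕ, 1 ≤ n → IsOpen (U n) := by
    intro n hn
    rw [Metric.isOpen_iff]
    intro x₀ hx₀
    obtain ⟨δ, hδ, hstab⟩ := H1 (empR n x₀) (nice_empR hn x₀) hx₀
    obtain ⟨ρ, hρ, hcl⟩ := empR_unif_close hn x₀ (R := 2*(k:ℝ)+2) (by linarith) hδ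
    refine ⟨ρ, hρ, ?_⟩
    intro y hy
    have hyc : ∀ i, |y i - x₀ i| < ρ := by
      intro i
      have h := (dist_pi_lt_iff hρ).1 (mem_ball.1 hy) i
      rwa [Real.dist_eq] at h
    exact hstab (empR n y) (nice_empR hn y) (fun θ hθ => hcl y hyc θ hθ)
  have hUmeas : ∀ n, 1 ≤ n → MeasurableSet (U n) := fun n hn => (hUopen n hn).measurableSet
  have hPE : ∀ n, 1 ≤ n → P (E n) = Measure.pi (fun _ : Fin n => μ) (U n) := by
    intro n hn
    rw [hEeq n, ← Measure.map_apply (tup_measurable hmeas 0 n) (hUmeas n hn),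
      tup_law P μ hmeas hid hindep n 0]
  -- superadditivity
  have hsuper : ∀ n m : ℕ, 1 ≤ n → 1 ≤ m → P (E n) * P (E m) ≤ P (E (n+m)) := by
    intro n m hn hm
    have hnR : (0:ℝ) < (n:ℝ) := by exact_mod_cast (by omega : 0 < n)
    have hmR : (0:ℝ) < (m:ℝ) := by exact_mod_cast (by omega : 0 < m)
    have hsub : E n ∩ (tup X n m ⁻¹' U m) ⊆ E (n+m) := by
      rintro ω ⟨h1, h2⟩
      have h1' : Mn X n ω ∈ 𝒜 := h1
      rw [Mn_eq X n ω] at h1'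
      have h2' : ecoe (empR m (tup X n m ω)) ∈ 𝒜 := h2
      show Mn X (n+m) ω ∈ 𝒜
      have hcombo : Mn X (n+m) ω = ecoe (fun θ =>
          ((n:ℝ)/((n:ℝ)+(m:ℝ))) * empR n (fun i : Fin n => X (i:ℕ) ω) θ +
          ((m:ℝ)/((n:ℝ)+(m:ℝ))) * empR m (tup X n m ω) θ) := by
        funext θ
        show ((((n+m : ℕ):ℝ)⁻¹ * ∑ i ∈ Finset.range (n+m), Real.exp (θ * X i ω) : ℝ) : EReal)
          = _
        apply congrArg (fun t : ℝ => (t : EReal))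
        rw [sum_range_add' (fun i => Real.exp (θ * X i ω)) n m]
        show _ = ((n:ℝ)/((n:ℝ)+(m:ℝ))) * ((n:ℝ)⁻¹ * ∑ i : Fin n, Real.exp (θ * X (i:ℕ) ω)) +
          ((m:ℝ)/((n:ℝ)+(m:ℝ))) * ((m:ℝ)⁻¹ * ∑ i : Fin m, Real.exp (θ * X (n+(i:ℕ)) ω))
        rw [← Finset.sum_range (fun i => Real.exp (θ * X i ω)),
          ← Finset.sum_range (fun i => Real.exp (θ * X (n+i) ω))]
        push_cast
        field_simp
      rw [hcombo]
      refine H2 _ _ (nice_empR hn _) (nice_empR hm _) h1' h2' _ _ ?_ ?_ ?_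
      · positivity
      · positivity
      · field_simp
    have hint := (indep_blocks P hmeas hindep 0 n n m (by omega)).measure_inter_preimage_eq_mul
      (U n) (U m) (hUmeas n hn) (hUmeas m hm)
    have hEm' : P (tup X n m ⁻¹' U m) = P (E m) := by
      calc P (tup X n m ⁻¹' U m)
          = Measure.map (tup X n m) P (U m) :=
            (Measure.map_apply (tup_measurable hmeas n m) (hUmeas m hm)).symm
        _ = Measure.pi (fun _ : Fin m => μ) (U m) := by
            rw [tup_law P μ hmeas hid hindep m n]
        _ = P (E m) := (hPE m hm).symm
    calc P (E n) * P (E m)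
        = P (tup X 0 n ⁻¹' U n) * P (tup X n m ⁻¹' U m) := by rw [← hEeq n, hEm']
      _ = P (tup X 0 n ⁻¹' U n ∩ tup X n m ⁻¹' U m) := hint.symm
      _ = P (E n ∩ tup X n m ⁻¹' U m) := by rw [← hEeq n]
      _ ≤ P (E (n+m)) := measure_mono hsub
  -- positivity propagation
  have hprop : ∀ N, 1 ≤ N → P (E N) ≠ 0 → ∃ n₁ : ℕ, 1 ≤ n₁ ∧ ∀ n, n₁ ≤ n → P (E n) ≠ 0 := by
    intro N hN hpos
    have hpiU : Measure.pi (fun _ : Fin N => μ) (U N) ≠ 0 := by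
      rw [← hPE N hN]; exact hpos
    have hex : ∃ x, x ∈ U N ∧ ∀ i, x i ∈ suppS μ := by
      by_contra hcon
      push_neg at hcon
      have hsub : U N ⊆ (univ.pi fun _ : Fin N => suppS μ)ᶜ := by
        intro x hxU
        simp only [mem_compl_iff, Set.mem_pi, mem_univ, forall_const]
        intro hall
        obtain ⟨i, hi⟩ := hcon x hxU
        exact hi (hall i)
      exact hpiU (measure_mono_null hsub (pi_suppS_compl_null μ N))
    obtain ⟨x, hxU, hxS⟩ := hex
    obtain ⟨δ, hδ, hstab⟩ := H1 (empR N x) (nice_empR hN x) hxU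
    obtain ⟨D, hD, hpat⟩ := pattern_estimate hN x (R := 2*(k:ℝ)+2) (by linarith)
    obtain ⟨n₂, hn₂⟩ := exists_nat_gt (2*D/δ)
    refine ⟨max 1 n₂, le_max_left _ _, ?_⟩
    intro n hn
    have hn1 : 1 ≤ n := le_trans (le_max_left _ _) hn
    have hnn₂ : n₂ ≤ n := le_trans (le_max_right _ _) hn
    have hn0R : (0:ℝ) < (n:ℝ) := by exact_mod_cast (by omega : 0 < n)
    obtain ⟨y, hyx, hyest⟩ := hpat n hn1
    have hclose : ∀ θ ∈ Icc (-(2*(k:ℝ)+2)) (2*(k:ℝ)+2), |empR n y θ - empR N x θ| ≤ δ/2 := by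
      intro θ hθ
      refine le_trans (hyest θ hθ) ?_
      rw [div_le_iff₀ hn0R]
      have hcast : (n₂:ℝ) ≤ (n:ℝ) := by exact_mod_cast hnn₂
      have h1 : 2*D/δ < (n:ℝ) := lt_of_lt_of_le hn₂ hcast
      rw [div_lt_iff₀ hδ] at h1
      linarith
    obtain ⟨ρ, hρ, hcl2⟩ := empR_unif_close hn1 y (R := 2*(k:ℝ)+2) (by linarith) (half_pos hδ)
    have hball : (univ.pi fun i : Fin n => Metric.ball (y i) ρ) ⊆ U n := by
      intro z hz
      have hzc : ∀ i, |z i - y i| < ρ := by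
        intro i
        have := hz i (mem_univ i)
        rwa [Metric.mem_ball, Real.dist_eq] at this
      have hq : ∀ θ ∈ Icc (-(2*(k:ℝ)+2)) (2*(k:ℝ)+2), |empR n z θ - empR N x θ| ≤ δ := by
        intro θ hθ
        calc |empR n z θ - empR N x θ|
            ≤ |empR n z θ - empR n y θ| + |empR n y θ - empR N x θ| := abs_sub_le _ _ _
          _ ≤ δ/2 + δ/2 := add_le_add (hcl2 z hzc θ hθ) (hclose θ hθ)
          _ = δ := by ring
      exact hstab (empR n z) (nice_empR hn1 z) hq
    have hppos : Measure.pi (fun _ : Fin n => μ) (univ.pi fun i : Fin n => Metric.ball (y i) ρ) ≠ 0 := by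
      rw [Measure.pi_pi]
      rw [Finset.prod_ne_zero_iff]
      intro i _
      obtain ⟨j, hj⟩ := hyx i
      rw [hj]
      exact (hxS j ρ hρ).ne'
    rw [hPE n hn1]
    intro h0
    exact hppos (measure_mono_null hball h0)
  -- the sequence
  set u : ℕ → EReal := fun n : ℕ => (((n : ℝ)⁻¹ : ℝ) : EReal) * elog (P (E n)) with hu
  set L : EReal := ⨆ n ∈ Set.Ici (1:ℕ), u n with hL
  have hle0 : ∀ n : ℕ, 1 ≤ n → u n ≤ 0 := by
    intro n hn
    have hnpos : (0:ℝ) < (n:ℝ)⁻¹ := by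
      have : (0:ℝ) < (n:ℝ) := by exact_mod_cast (by omega : 0 < n)
      positivity
    by_cases h0 : P (E n) = 0
    · show (((n : ℝ)⁻¹ : ℝ) : EReal) * elog (P (E n)) ≤ 0
      rw [h0, elog_zero, EReal.coe_mul_bot_of_pos hnpos]
      exact bot_le
    · show (((n : ℝ)⁻¹ : ℝ) : EReal) * elog (P (E n)) ≤ 0
      rw [elog_of_ne h0, ← EReal.coe_mul]
      refine EReal.coe_nonpos.2 ?_
      have hlog : Real.log (P (E n)).toReal ≤ 0 :=
        Real.log_nonpos ENNReal.toReal_nonneg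
          (ENNReal.toReal_le_of_le_ofReal one_pos.le (by simpa using prob_le_one))
      exact mul_nonpos_of_nonneg_of_nonpos hnpos.le hlog
  have hL0 : L ≤ 0 := iSup₂_le hle0
  have hup : limsup u atTop ≤ L := by
    refine limsup_le_of_le (by isBoundedDefault) ?_
    refine eventually_atTop.2 ⟨1, fun n hn => ?_⟩
    exact le_iSup₂ (f := fun (n : ℕ) (_ : n ∈ Set.Ici 1) => u n) n hn
  have hlow : ∀ m : ℕ, 1 ≤ m → u m ≤ liminf u atTop := by
    intro m hm
    have hmR : (0:ℝ) < (m:ℝ) := by exact_mod_cast (by omega : 0 < m)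
    by_cases hPm : P (E m) = 0
    · have hb : u m = ⊥ := by
        show (((m : ℝ)⁻¹ : ℝ) : EReal) * elog (P (E m)) = ⊥
        rw [hPm, elog_zero, EReal.coe_mul_bot_of_pos (by positivity)]
      rw [hb]
      exact bot_le
    · obtain ⟨n₀, hn₀1, hpos⟩ := hprop m hm hPm
      set c : ℝ := Real.log (P (E m)).toReal with hc
      have hc0 : c ≤ 0 := Real.log_nonpos ENNReal.toReal_nonneg
        (ENNReal.toReal_le_of_le_ofReal one_pos.le (by simpa using prob_le_one))
      have hum : u m = ((c/(m:ℝ) : ℝ) : EReal) := by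
        show (((m : ℝ)⁻¹ : ℝ) : EReal) * elog (P (E m)) = _
        rw [elog_of_ne hPm, ← EReal.coe_mul, ← hc, inv_mul_eq_div]
      -- the minimum over the residue window
      have hIcc_ne : (Finset.Icc n₀ (n₀+m)).Nonempty := ⟨n₀, by simp⟩
      set dm : ℝ := min 0 ((Finset.Icc n₀ (n₀+m)).inf' hIcc_ne
        (fun j => Real.log (P (E j)).toReal)) with hdm
      have hdm0 : dm ≤ 0 := min_le_left _ _
      have hdmle : ∀ j ∈ Finset.Icc n₀ (n₀+m), dm ≤ Real.log (P (E j)).toReal :=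
        fun j hj => le_trans (min_le_right _ _) (Finset.inf'_le _ hj)
      -- iterated superadditivity
      have hiter : ∀ (q j : ℕ), 1 ≤ j → (P (E m))^q * P (E j) ≤ P (E (q*m + j)) := by
        intro q
        induction q with
        | zero => intro j hj; simp
        | succ q ih =>
            intro j hj
            have h1 : (P (E m))^(q+1) * P (E j) = P (E m) * ((P (E m))^q * P (E j)) := by
              ring
            rw [h1]
            calc P (E m) * ((P (E m))^q * P (E j))
                ≤ P (E m) * P (E (q*m + j)) := mul_le_mul_right (ih j hj) _
              _ ≤ P (E (m + (q*m + j))) := hsuper m (q*m+j) hm (by omega)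
              _ = P (E ((q+1)*m + j)) := by
                  congr 1
                  ring
      -- eventual lower bound
      have hbound : ∀ n : ℕ, n₀ + m ≤ n →
          ((c/(m:ℝ) + dm/(n:ℝ) : ℝ) : EReal) ≤ u n := by
        intro n hn
        have hn1 : 1 ≤ n := by omega
        have hnR : (0:ℝ) < (n:ℝ) := by exact_mod_cast (by omega : 0 < n)
        set t : ℕ := n - n₀ with ht
        set q : ℕ := t / m with hq
        set s : ℕ := t % m with hs
        have hdm' : m * q + s = t := Nat.div_add_mod t m
        have hsm : s < m := Nat.mod_lt t (by omega)
        set j : ℕ := n₀ + s with hj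
        have hqj : q*m + j = n := by
          rw [hj]
          calc q*m + (n₀ + s) = (m*q + s) + n₀ := by ring
            _ = t + n₀ := by rw [hdm']
            _ = n := by omega
        have hj1 : 1 ≤ j := by omega
        have hjIcc : j ∈ Finset.Icc n₀ (n₀+m) := by
          rw [Finset.mem_Icc]
          omega
        have hjpos : P (E j) ≠ 0 := hpos j (by omega)
        have hprodle : (P (E m))^q * P (E j) ≤ P (E n) := by
          rw [← hqj]
          exact hiter q j hj1
        have hPn0 : P (E n) ≠ 0 := by
          intro h0
          rw [h0, nonpos_iff_eq_zero, mul_eq_zero] at hprodle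
          rcases hprodle with h | h
          · exact hPm (pow_eq_zero_iff'.mp h).1
          · exact hjpos h
        have hPntop : P (E n) ≠ ⊤ := measure_ne_top P _
        have hPmtop : P (E m) ≠ ⊤ := measure_ne_top P _
        have hPjtop : P (E j) ≠ ⊤ := measure_ne_top P _
        -- real logs
        have htm : (P (E m)).toReal > 0 := ENNReal.toReal_pos hPm hPmtop
        have htj : (P (E j)).toReal > 0 := ENNReal.toReal_pos hjpos hPjtop
        have htoreal : ((P (E m))^q * P (E j)).toReal ≤ (P (E n)).toReal :=
          ENNReal.toReal_mono hPntop hprodle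
        have htoreal' : ((P (E m))^q * P (E j)).toReal
            = (P (E m)).toReal^q * (P (E j)).toReal := by
          rw [ENNReal.toReal_mul, ENNReal.toReal_pow]
        have hlogn : (q:ℝ) * c + Real.log (P (E j)).toReal ≤ Real.log (P (E n)).toReal := by
          have h1 := Real.log_le_log (by rw [htoreal']; positivity) htoreal
          rw [htoreal', Real.log_mul (by positivity) (by positivity), Real.log_pow] at h1
          exact h1
        have hlogn' : (q:ℝ) * c + dm ≤ Real.log (P (E n)).toReal :=
          le_trans (by linarith [hdmle j hjIcc]) hlogn
        have hun : u n = (((n:ℝ)⁻¹ * Real.log (P (E n)).toReal : ℝ) : EReal) := by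
          show (((n : ℝ)⁻¹ : ℝ) : EReal) * elog (P (E n)) = _
          rw [elog_of_ne hPn0, ← EReal.coe_mul]
        rw [hun]
        refine EReal.coe_le_coe_iff.2 ?_
        have hqmn : (q:ℝ)*(m:ℝ) ≤ (n:ℝ) := by
          have : q*m ≤ n := by omega
          exact_mod_cast this
        have hstep : c/(m:ℝ) ≤ (q:ℝ)*c/(n:ℝ) := by
          rw [div_le_div_iff₀ hmR hnR]
          calc c * (n:ℝ) ≤ c * ((q:ℝ)*(m:ℝ)) := by
                apply mul_le_mul_of_nonpos_left hqmn hc0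
            _ = (q:ℝ)*c*(m:ℝ) := by ring
        have hfinal : (n:ℝ)⁻¹ * ((q:ℝ)*c + dm) ≤ (n:ℝ)⁻¹ * Real.log (P (E n)).toReal :=
          mul_le_mul_of_nonneg_left hlogn' (by positivity)
        have heq : (n:ℝ)⁻¹ * ((q:ℝ)*c + dm) = (q:ℝ)*c/(n:ℝ) + dm/(n:ℝ) := by
          field_simp
        linarith [hstep]
      -- liminf bound
      have hwlim : Tendsto (fun n : ℕ => (c/(m:ℝ) + dm/(n:ℝ) : ℝ)) atTop (nhds (c/(m:ℝ))) := by
        have h1 := tendsto_const_div_atTop_nhds_zero_nat dm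
        have h2 := Tendsto.add (tendsto_const_nhds (x := c/(m:ℝ)) (f := atTop)) h1
        simpa using h2
      have hliminf : ((c/(m:ℝ) : ℝ) : EReal) ≤ liminf u atTop := by
        have h1 : liminf (fun n : ℕ => ((c/(m:ℝ) + dm/(n:ℝ) : ℝ) : EReal)) atTop
            = ((c/(m:ℝ) : ℝ) : EReal) :=
          (EReal.tendsto_coe.2 hwlim).liminf_eq
        rw [← h1]
        refine liminf_le_liminf ?_
        exact eventually_atTop.2 ⟨n₀ + m, fun n hn => hbound n hn⟩
      rw [hum]
      exact hliminf
  have hLlim : L ≤ liminf u atTop := iSup₂_le hlow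
  have hlili : liminf u atTop ≤ limsup u atTop := liminf_le_limsup
  have h1 : liminf u atTop = L := le_antisymm (le_trans hlili hup) hLlim
  have h2 : limsup u atTop = L := le_antisymm hup (le_trans hLlim hlili)
  exact ⟨tendsto_of_liminf_eq_limsup h1 h2, hL0⟩
/-- Super-additivity: the deviation limits along the sets `A_k(f)` (and along
`V_k(f)` for the function finite only at the origin) exist and equal the
supremum, so the upper and lower deviation functions coincide. -/
theorem super_additivity
    {Ω : Type*} [MeasurableSpace Ω] (P : Measure Ω) [IsProbabilityMeasure P]
    (X : ℕ → Ω → ℝ) (μ : Measure ℝ) [IsProbabilityMeasure μ]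
    (hmeas : ∀ i, Measurable (X i))
    (hid : ∀ i, Measure.map (X i) P = μ)
    (hindep : ProbabilityTheory.iIndepFun X P) :
    (∀ f : ℝ → EReal, IsAdm0 f → f 0 = 1 → effDom f ≠ {0} →
      ∀ k : ℕ, 1 ≤ k → ∀ ε : ℝ, Adm f k ε →
        (Tendsto (fun n : ℕ => (((n : ℝ)⁻¹ : ℝ) : EReal) *
            elog (P {ω | Mn X n ω ∈ Ak f k ε})) atTop
          (nhds (⨆ n ∈ Set.Ici (1 : ℕ), (((n : ℝ)⁻¹ : ℝ) : EReal) *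
            elog (P {ω | Mn X n ω ∈ Ak f k ε}))) ∧
         (⨆ n ∈ Set.Ici (1 : ℕ), (((n : ℝ)⁻¹ : ℝ) : EReal) *
            elog (P {ω | Mn X n ω ∈ Ak f k ε})) ≤ 0 ∧
         limsup (fun n : ℕ => (((n : ℝ)⁻¹ : ℝ) : EReal) *
            elog (P {ω | Mn X n ω ∈ Ak f k ε})) atTop =
          liminf (fun n : ℕ => (((n : ℝ)⁻¹ : ℝ) : EReal) *
            elog (P {ω | Mn X n ω ∈ Ak f k ε})) atTop)) ∧
    (∀ f : ℝ → EReal, f 0 = 1 → (∀ θ : ℝ, θ ≠ 0 → f θ = ⊤) →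
      ∀ k : ℕ, 1 ≤ k →
        Tendsto (fun n : ℕ => (((n : ℝ)⁻¹ : ℝ) : EReal) *
            elog (P {ω | Mn X n ω ∈ Vk k f})) atTop
          (nhds (⨆ n ∈ Set.Ici (1 : ℕ), (((n : ℝ)⁻¹ : ℝ) : EReal) *
            elog (P {ω | Mn X n ω ∈ Vk k f}))) ∧
        (⨆ n ∈ Set.Ici (1 : ℕ), (((n : ℝ)⁻¹ : ℝ) : EReal) *
            elog (P {ω | Mn X n ω ∈ Vk k f})) ≤ 0) := by
  constructor
  · intro f hf hf0 _hdom k hk ε hAdm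
    obtain ⟨hcombo, hstab⟩ := caseA_H hf hf0 hk hAdm
    obtain ⟨ht, hle⟩ := generic_limit P X μ hmeas hid hindep (Ak f k ε) k hk hcombo hstab
    exact ⟨ht, hle, ht.limsup_eq.trans ht.liminf_eq.symm⟩
  · intro f hf0 hft k hk
    obtain ⟨hcombo, hstab⟩ := caseB_H hf0 hft hk
    exact generic_limit P X μ hmeas hid hindep (Vk k f) k hk hcombo hstab

end
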